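/- Let K ≥ 1 and let a_1, …, a_K be real numbers with a_1 = 0 and a_i > 0 for every i ≥ 2. Then the improper integral of f over [0, ∞) converges and ∫_{0}^{∞} f(x) dx = (1/log 2)·log(∑_{i=1}^{K} e^{−a_i}). -/

import Mathlib

/-- The soft-max like function
`f(x) = (∑ i, 2^x * a i * exp(-2^x * a i)) / (∑ i, exp(-2^x * a i))`. -/
noncomputable def softMaxLike {K : ℕ} (a : Fin K → ℝ) (x : ℝ) : ℝ :=
  (∑ i, (2 : ℝ) ^ x * a i * Real.exp (-((2 : ℝ) ^ x * a i))) /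
    (∑ i, Real.exp (-((2 : ℝ) ^ x * a i)))

/-- If `a 0 = 0` and `a i > 0` for `i ≥ 2` (1-based), then the improper integral of the
soft-max like function over `[0, ∞)` converges and equals
`(1/log 2) * log (∑ i, exp (-a i))`. -/
theorem integral_softMaxLike_Ici (K : ℕ) (hK : 1 ≤ K) (a : Fin K → ℝ)
    (h0 : a ⟨0, hK⟩ = 0) (hpos : ∀ i : Fin K, 1 ≤ (i : ℕ) → 0 < a i) :
    MeasureTheory.IntegrableOn (softMaxLike a) (Set.Ici 0) ∧
      ∫ x in Set.Ici (0 : ℝ), softMaxLike a x =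
        (1 / Real.log 2) * Real.log (∑ i, Real.exp (-a i)) := by
  have hne : Nonempty (Fin K) := Fin.pos_iff_nonempty.mp hK
  set i0 : Fin K := ⟨0, hK⟩ with hi0
  have ha : ∀ i, 0 ≤ a i := by
    intro i
    rcases Nat.eq_zero_or_pos i.1 with h | h
    · have : i = i0 := Fin.ext h
      rw [this, h0]
    · exact (hpos i h).le
  have hlog2 : (0:ℝ) < Real.log 2 := Real.log_pos (by norm_num)
  set S : ℝ → ℝ := fun t => ∑ i, Real.exp (-((2:ℝ)^t * a i)) with hSdef
  have hSpos : ∀ t, 0 < S t :=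
    fun t => Finset.sum_pos (fun i _ => Real.exp_pos _) Finset.univ_nonempty
  -- derivative of S
  have hS' : ∀ t, HasDerivAt S
      (-(Real.log 2) * ∑ i, (2:ℝ)^t * a i * Real.exp (-((2:ℝ)^t * a i))) t := by
    intro t
    have h : HasDerivAt S
        (∑ i, Real.exp (-((2:ℝ)^t * a i)) * -((2:ℝ)^t * Real.log 2 * a i)) t := by
      apply HasDerivAt.fun_sum
      intro i _
      have h1 : HasDerivAt (fun x : ℝ => (2:ℝ)^x) ((2:ℝ)^t * Real.log 2) t :=
        (Real.hasStrictDerivAt_const_rpow (by norm_num) t).hasDerivAt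
      exact ((h1.mul_const (a i)).neg).exp
    convert h using 1
    rw [Finset.mul_sum]
    exact Finset.sum_congr rfl fun i _ => by ring
  set g : ℝ → ℝ := fun t => -(1/Real.log 2) * Real.log (S t) with hgdef
  have hg' : ∀ t, HasDerivAt g (softMaxLike a t) t := by
    intro t
    have h := (((hS' t).log (hSpos t).ne')).const_mul (-(1/Real.log 2))
    refine h.congr_deriv ?_
    unfold softMaxLike
    field_simp
    exact mul_div_cancel_right₀ _ (hSpos t).ne'
  have hfnn : ∀ t, 0 ≤ softMaxLike a t := by
    intro t
    apply div_nonneg _ (hSpos t).le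
    apply Finset.sum_nonneg
    intro i _
    have h2t : (0:ℝ) < (2:ℝ)^t := Real.rpow_pos_of_pos (by norm_num) t
    exact mul_nonneg (mul_nonneg h2t.le (ha i)) (Real.exp_pos _).le
  have hSlim : Filter.Tendsto S Filter.atTop (nhds 1) := by
    have h : Filter.Tendsto S Filter.atTop
        (nhds (∑ i : Fin K, if i = i0 then (1:ℝ) else 0)) := by
      apply tendsto_finset_sum
      intro i _
      by_cases hi : i = i0
      · simp only [hi, h0]
        simp only [mul_zero, neg_zero, Real.exp_zero]
        exact tendsto_const_nhds
      · have hai : 0 < a i := by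
          apply hpos
          rcases Nat.eq_zero_or_pos i.1 with h' | h'
          · exact absurd (Fin.ext h') hi
          · exact h'
        simp only [hi, if_false]
        apply Real.tendsto_exp_atBot.comp
        have h2t : Filter.Tendsto (fun t : ℝ => (2:ℝ)^t * a i) Filter.atTop Filter.atTop := by
          apply Filter.Tendsto.atTop_mul_const hai
          have heq : (fun t : ℝ => (2:ℝ)^t) = fun t => Real.exp (Real.log 2 * t) :=
            funext fun t => Real.rpow_def_of_pos (by norm_num) t
          show Filter.Tendsto (fun t : ℝ => (2:ℝ)^t) Filter.atTop Filter.atTop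
          rw [heq]
          exact Real.tendsto_exp_atTop.comp (Filter.tendsto_id.const_mul_atTop hlog2)
        exact Filter.tendsto_neg_atBot_iff.mpr h2t
    simpa using h
  have hglim : Filter.Tendsto g Filter.atTop (nhds 0) := by
    have hlogS : Filter.Tendsto (fun t => Real.log (S t)) Filter.atTop (nhds 0) := by
      have := (Real.continuousAt_log one_ne_zero).tendsto.comp hSlim
      simpa [Function.comp_def] using this
    have h2 := hlogS.const_mul (-(1/Real.log 2))
    rw [mul_zero] at h2
    exact h2
  have key1 : MeasureTheory.IntegrableOn (softMaxLike a) (Set.Ioi 0) :=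
    MeasureTheory.integrableOn_Ioi_deriv_of_nonneg (hg' 0).continuousAt.continuousWithinAt
      (fun x _ => hg' x) (fun x _ => hfnn x) hglim
  have key2 : ∫ x in Set.Ioi (0:ℝ), softMaxLike a x = 0 - g 0 :=
    MeasureTheory.integral_Ioi_of_hasDerivAt_of_nonneg (hg' 0).continuousAt.continuousWithinAt
      (fun x _ => hg' x) (fun x _ => hfnn x) hglim
  have hS0 : S 0 = ∑ i, Real.exp (-a i) := by
    simp [hSdef, Real.rpow_zero]
  constructor
  · rwa [integrableOn_Ici_iff_integrableOn_Ioi]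
  · rw [MeasureTheory.integral_Ici_eq_integral_Ioi, key2, hgdef]
    simp only [hS0]
    ring
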